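/- Let c₁, c₂ be points of the Euclidean plane ℝ² with d = dist(c₁, c₂) > 0, and let R₁, R₂ ≥ 0 satisfy d ≥ |R₁ − R₂|. Then: (a) there exists a point c₃ on the segment between c₁ and c₂ such that the union of the closed disks of radius R₁ around c₁ and of radius R₂ around c₂ is contained in the closed disk of radius (d + R₁ + R₂)/2 around c₃; and (b) for every point c and every r ≥ 0 such that both closed disks are contained in the closed disk of radius r around c, one has r ≥ (d + R₁ + R₂)/2. -/

import Mathlib

open Metric

/-- The smallest disk accommodating two disks: if `d = dist(c₁, c₂) > 0` and
`d ≥ |R₁ − R₂|`, then (a) some point `c₃` on the segment from `c₁` to `c₂`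
carries a disk of radius `(d + R₁ + R₂)/2` containing both given disks, and
(b) every disk containing both given disks has radius at least
`(d + R₁ + R₂)/2`. -/
theorem smallest_enclosing_disk (c₁ c₂ : EuclideanSpace ℝ (Fin 2))
    (hd : 0 < dist c₁ c₂) (R₁ R₂ : ℝ) (hR₁ : 0 ≤ R₁) (hR₂ : 0 ≤ R₂)
    (h : |R₁ - R₂| ≤ dist c₁ c₂) :
    (∃ c₃ ∈ segment ℝ c₁ c₂,
        closedBall c₁ R₁ ∪ closedBall c₂ R₂ ⊆
          closedBall c₃ ((dist c₁ c₂ + R₁ + R₂) / 2)) ∧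
    (∀ (c : EuclideanSpace ℝ (Fin 2)) (r : ℝ), 0 ≤ r →
        closedBall c₁ R₁ ∪ closedBall c₂ R₂ ⊆ closedBall c r →
        (dist c₁ c₂ + R₁ + R₂) / 2 ≤ r) := by
  set d := dist c₁ c₂ with hdd
  have hd0 : d ≠ 0 := ne_of_gt hd
  set u := c₂ - c₁ with hu
  have hnu : ‖u‖ = d := by rw [hu, ← dist_eq_norm, dist_comm]
  have habs := abs_le.mp h
  constructor
  · set s : ℝ := (d - R₁ + R₂) / (2 * d) with hs
    have hs0 : 0 ≤ s := div_nonneg (by linarith [habs.2]) (by linarith)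
    have hs1 : s ≤ 1 := by
      rw [div_le_one (by linarith : (0:ℝ) < 2 * d)]
      linarith [habs.1]
    refine ⟨c₁ + s • u, ⟨1 - s, s, by linarith, hs0, by ring, by rw [hu]; module⟩, ?_⟩
    have h1 : dist (c₁ + s • u) c₁ = (d - R₁ + R₂) / 2 := by
      have e : c₁ + s • u - c₁ = s • u := by module
      rw [dist_eq_norm, e, norm_smul, hnu, Real.norm_eq_abs, abs_of_nonneg hs0, hs]
      field_simp
    have h2 : dist (c₁ + s • u) c₂ = (d + R₁ - R₂) / 2 := by
      have e : c₁ + s • u - c₂ = (s - 1) • u := by rw [hu]; module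
      rw [dist_eq_norm, e, norm_smul, hnu, Real.norm_eq_abs, abs_of_nonpos (by linarith), hs]
      field_simp
      ring
    rintro x (hx | hx) <;> rw [mem_closedBall] at hx ⊢
    · calc dist x (c₁ + s • u) ≤ dist x c₁ + dist c₁ (c₁ + s • u) := dist_triangle _ _ _
        _ ≤ R₁ + (d - R₁ + R₂) / 2 := by
            rw [dist_comm c₁, h1]; linarith
        _ = (d + R₁ + R₂) / 2 := by ring
    · calc dist x (c₁ + s • u) ≤ dist x c₂ + dist c₂ (c₁ + s • u) := dist_triangle _ _ _
        _ ≤ R₂ + (d + R₁ - R₂) / 2 := by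
            rw [dist_comm c₂, h2]; linarith
        _ = (d + R₁ + R₂) / 2 := by ring
  · intro c r hr hsub
    set x₁ := c₁ - (R₁ / d) • u with hx1
    set x₂ := c₂ + (R₂ / d) • u with hx2
    have h1 : x₁ ∈ closedBall c₁ R₁ := by
      have e : x₁ - c₁ = (-(R₁ / d)) • u := by rw [hx1]; module
      rw [mem_closedBall, dist_eq_norm, e, norm_smul, hnu, Real.norm_eq_abs, abs_neg,
        abs_of_nonneg (div_nonneg hR₁ hd.le)]
      field_simp
      exact le_rfl
    have h2 : x₂ ∈ closedBall c₂ R₂ := by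
      have e : x₂ - c₂ = (R₂ / d) • u := by rw [hx2]; module
      rw [mem_closedBall, dist_eq_norm, e, norm_smul, hnu, Real.norm_eq_abs,
        abs_of_nonneg (div_nonneg hR₂ hd.le)]
      field_simp
      exact le_rfl
    have h12 : dist x₁ x₂ = d + R₁ + R₂ := by
      have e : x₁ - x₂ = (-((d + R₁ + R₂) / d)) • u := by
        rw [hx1, hx2, hu]
        have : (R₁ / d + R₂ / d + 1) = (d + R₁ + R₂) / d := by field_simp; ring
        rw [← this]; module
      rw [dist_eq_norm, e, norm_smul, hnu, Real.norm_eq_abs, abs_neg,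
        abs_of_nonneg (div_nonneg (by linarith) hd.le)]
      field_simp
    have t1 := hsub (Or.inl h1)
    have t2 := hsub (Or.inr h2)
    rw [mem_closedBall] at t1 t2
    have := dist_triangle x₁ c x₂
    rw [h12] at this
    have := dist_comm c x₂ ▸ this
    linarith
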